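/- Let B ∈ ℝ^{n×m} have full column rank m, let Q ∈ ℝ^{N×N} be negative definite, S ∈ ℝ^{N×m}, R ∈ ℝ^{m×m}, and let V ∈ ℝ^{n×N}. Suppose V Q V^⊤ + V S B^⊤ + B S^⊤ V^⊤ + B R B^⊤ ⪰ 0. Then there exists W ∈ ℝ^{m×N} with V = B W. Moreover, this W satisfies W Q W^⊤ + W S + S^⊤ W^⊤ + R ⪰ 0. -/

import Mathlib

open Matrix

/-- direction (ii) of the set-equivalence theorem. If `B` has full column
rank, `Q ≺ 0`, and `V Q Vᵀ + V S Bᵀ + B Sᵀ Vᵀ + B R Bᵀ ⪰ 0`, then `V = B W` for some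
`W` satisfying the quadratic bound `W Q Wᵀ + W S + Sᵀ Wᵀ + R ⪰ 0`. -/
theorem stmt1 {n m N : ℕ}
    (B : Matrix (Fin n) (Fin m) ℝ)
    (hB : ∀ v : Fin m → ℝ, B.mulVec v = 0 → v = 0)
    (Q : Matrix (Fin N) (Fin N) ℝ) (hQ : (-Q).PosDef)
    (S : Matrix (Fin N) (Fin m) ℝ) (R : Matrix (Fin m) (Fin m) ℝ)
    (V : Matrix (Fin n) (Fin N) ℝ)
    (hbound : (V * Q * Vᵀ + V * (S * Bᵀ) + (B * Sᵀ) * Vᵀ + B * R * Bᵀ).PosSemidef) :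
    ∃ W : Matrix (Fin m) (Fin N) ℝ,
      V = B * W ∧ (W * Q * Wᵀ + W * S + Sᵀ * Wᵀ + R).PosSemidef := by
  -- the Gram matrix of `B` is positive definite, hence invertible
  have hG : (Bᵀ * B).PosDef := by
    refine .of_dotProduct_mulVec_pos (by simpa using isHermitian_conjTranspose_mul_self B) fun x hx => ?_
    have h1 : star x ⬝ᵥ (Bᵀ * B) *ᵥ x = (B *ᵥ x) ⬝ᵥ (B *ᵥ x) := by
      rw [← mulVec_mulVec, dotProduct_mulVec, star_trivial, vecMul_transpose]
    rw [h1]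
    have hne : B *ᵥ x ≠ 0 := fun h => hx (hB x h)
    exact lt_of_le_of_ne (Finset.sum_nonneg fun i _ => mul_self_nonneg _)
      (fun h => hne (dotProduct_self_eq_zero.mp h.symm))
  set G : Matrix (Fin m) (Fin m) ℝ := Bᵀ * B with hGdef
  have hGu : IsUnit G.det := isUnit_iff_ne_zero.mpr hG.det_pos.ne'
  have hinv : G⁻¹ * G = 1 := nonsing_inv_mul G hGu
  have hinv' : G * G⁻¹ = 1 := mul_nonsing_inv G hGu
  have hGsymm : Gᵀ = G := (by simpa using hG.1 : G.IsSymm).eq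
  have hGinvT : G⁻¹ᵀ = G⁻¹ := by rw [transpose_nonsing_inv, hGsymm]
  set P : Matrix (Fin n) (Fin n) ℝ := B * G⁻¹ * Bᵀ with hPdef
  set E : Matrix (Fin n) (Fin n) ℝ := (1 : Matrix (Fin n) (Fin n) ℝ) - P with hEdef
  have hPT : Pᵀ = P := by
    simp [hPdef, transpose_mul, hGinvT, Matrix.mul_assoc]
  have hET : Eᵀ = E := by simp [hEdef, transpose_sub, hPT]
  have hEB : E * B = 0 := by
    have : P * B = B := by
      rw [hPdef, Matrix.mul_assoc (B * G⁻¹), ← hGdef, Matrix.mul_assoc, hinv, Matrix.mul_one]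
    rw [hEdef, Matrix.sub_mul, Matrix.one_mul, this, sub_self]
  have hBE : Bᵀ * E = 0 := by
    have := congrArg Matrix.transpose hEB
    rwa [transpose_mul, hET, transpose_zero] at this
  set X : Matrix (Fin n) (Fin N) ℝ := E * V with hXdef
  -- conjugating the bound by E kills everything except X Q Xᵀ
  have hM : (X * Q * Xᵀ).PosSemidef := by
    have h := hbound.mul_mul_conjTranspose_same E
    have hEH : Eᴴ = E := by rw [conjTranspose_eq_transpose_of_trivial, hET]
    rw [hEH] at h
    have heq : E * (V * Q * Vᵀ + V * (S * Bᵀ) + (B * Sᵀ) * Vᵀ + B * R * Bᵀ) * E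
        = X * Q * Xᵀ := by
      have z2 : E * (V * (S * Bᵀ)) * E = 0 := by
        simp [Matrix.mul_assoc, hBE]
      have z3 : E * ((B * Sᵀ) * Vᵀ) * E = 0 := by
        simp [← Matrix.mul_assoc, hEB]
      have z4 : E * (B * R * Bᵀ) * E = 0 := by
        simp [← Matrix.mul_assoc, hEB]
      simp only [Matrix.mul_add, Matrix.add_mul, z2, z3, z4, add_zero]
      rw [hXdef, transpose_mul, hET]
      simp [Matrix.mul_assoc]
    rwa [heq] at h
  -- negative definiteness of Q forces X = 0
  have hX0 : X = 0 := by
    ext i j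
    have hrow : (fun k => X i k) = 0 := by
      by_contra hne
      set x : Fin N → ℝ := fun k => X i k with hxdef
      have hdiag : (X * Q * Xᵀ) i i = x ⬝ᵥ Q *ᵥ x := by
        simp only [mul_apply, transpose_apply, dotProduct, mulVec, hxdef,
          Finset.sum_mul, Finset.mul_sum]
        rw [Finset.sum_comm]
        refine Finset.sum_congr rfl fun k _ => Finset.sum_congr rfl fun l _ => by ring
      have hge : 0 ≤ (X * Q * Xᵀ) i i := by
        simpa using hM.dotProduct_mulVec_nonneg (Pi.single i 1)
      have hlt : 0 < x ⬝ᵥ (-Q) *ᵥ x := by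
        simpa using hQ.dotProduct_mulVec_pos hne
      rw [neg_mulVec, dotProduct_neg] at hlt
      rw [hdiag] at hge
      linarith
    exact congrFun hrow j
  set C : Matrix (Fin m) (Fin n) ℝ := G⁻¹ * Bᵀ with hCdef
  have hCB : C * B = 1 := by
    rw [hCdef, Matrix.mul_assoc, ← hGdef, hinv]
  have hBC : Bᵀ * Cᵀ = 1 := by
    have := congrArg Matrix.transpose hCB
    rwa [transpose_mul, transpose_one] at this
  refine ⟨C * V, ?_, ?_⟩
  · -- V = B * (C * V)
    have h0 : E * V = 0 := by rw [← hXdef]; exact hX0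
    rw [hEdef, Matrix.sub_mul, Matrix.one_mul] at h0
    have hV : V = P * V := sub_eq_zero.mp h0
    conv_lhs => rw [hV]
    rw [hPdef, hCdef]
    simp [Matrix.mul_assoc]
  · -- the quadratic bound for W = C * V
    have h := hbound.mul_mul_conjTranspose_same C
    have hCH : Cᴴ = Cᵀ := by rw [conjTranspose_eq_transpose_of_trivial]
    rw [hCH] at h
    have heq : C * (V * Q * Vᵀ + V * (S * Bᵀ) + (B * Sᵀ) * Vᵀ + B * R * Bᵀ) * Cᵀ
        = (C * V) * Q * (C * V)ᵀ + (C * V) * S + Sᵀ * (C * V)ᵀ + R := by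
      have hVC : Vᵀ * Cᵀ = (C * V)ᵀ := (transpose_mul C V).symm
      have t1 : C * (V * Q * Vᵀ) * Cᵀ = (C * V) * Q * (C * V)ᵀ := by
        simp only [Matrix.mul_assoc]; rw [hVC]
      have t2 : C * (V * (S * Bᵀ)) * Cᵀ = (C * V) * S := by
        simp only [Matrix.mul_assoc]; rw [hBC, Matrix.mul_one]
      have t3 : C * ((B * Sᵀ) * Vᵀ) * Cᵀ = Sᵀ * (C * V)ᵀ := by
        simp only [transpose_mul, ← Matrix.mul_assoc]; rw [hCB, Matrix.one_mul]
      have t4 : C * (B * R * Bᵀ) * Cᵀ = R := by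
        simp only [← Matrix.mul_assoc]; rw [hCB, Matrix.one_mul, Matrix.mul_assoc, hBC,
          Matrix.mul_one]
      simp only [Matrix.mul_add, Matrix.add_mul, t1, t2, t3, t4]
    rwa [heq] at h
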